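/- arXiv:1611.03052 — 5 statements merged into one kernel-verified Lean document; each statement's English description precedes it below -/
import Mathlib

section
/- For every k ≥ 3 one has a k = s 1 · a (k−1) − a (k−2), and likewise b k = s 1 · b (k−1) − b (k−2). -/
/-- for every `k ≥ 3`, `a k = s 1 · a (k−1) − a (k−2)` and likewise
`b k = s 1 · b (k−1) − b (k−2)`. -/
theorem three_term_recurrence {R : Type*} [CommRing R]
    (s a b : ℕ → R)
    (hs0 : s 0 = 2)
    (ha : ∀ k : ℕ, 2 ≤ k → a k = s (k - 1) * a 1 + b (k - 1))
    (hb : ∀ k : ℕ, 2 ≤ k → b k = s (k - 1) * b 1 + a (k - 1))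
    (hrec : ∀ k : ℕ, s (k + 2) = s 1 * s (k + 1) - s k) :
    ∀ k : ℕ, 3 ≤ k →
      a k = s 1 * a (k - 1) - a (k - 2) ∧ b k = s 1 * b (k - 1) - b (k - 2) := by
  have Q : ∀ j : ℕ,
      s (j+1) * b 1 + 2 * a (j+1) = s j * a 1 + s 1 * b (j+1) ∧
      s (j+1) * a 1 + 2 * b (j+1) = s j * b 1 + s 1 * a (j+1) := by
    intro j
    induction j with
    | zero => constructor <;> (rw [hs0]; ring)
    | succ n ih =>
      have ha2 : a (n+2) = s (n+1) * a 1 + b (n+1) := ha (n+2) (by omega)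
      have hb2 : b (n+2) = s (n+1) * b 1 + a (n+1) := hb (n+2) (by omega)
      have hr := hrec n
      constructor
      · rw [ha2, hb2, hr]; linear_combination ih.2
      · rw [ha2, hb2, hr]; linear_combination ih.1
  intro k hk
  obtain ⟨j, rfl⟩ : ∃ j, k = j + 3 := ⟨k - 3, by omega⟩
  have ha3 : a (j+3) = s (j+2) * a 1 + b (j+2) := ha (j+3) (by omega)
  have hb3 : b (j+3) = s (j+2) * b 1 + a (j+2) := hb (j+3) (by omega)
  have ha2 : a (j+2) = s (j+1) * a 1 + b (j+1) := ha (j+2) (by omega)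
  have hb2 : b (j+2) = s (j+1) * b 1 + a (j+1) := hb (j+2) (by omega)
  have e1 : j + 3 - 1 = j + 2 := rfl
  have e2 : j + 3 - 2 = j + 1 := rfl
  rw [e1, e2]
  constructor
  · rw [ha3, hb2, ha2, hrec j]; linear_combination (Q j).1
  · rw [hb3, ha2, hb2, hrec j]; linear_combination (Q j).2
end

section
/- Define B : ℤ → R by B t = b t for t ≥ 1 and B t = − a (1 − t) for t ≤ 0 (the paper's kink convention x(γ_{−r}^C) = − x(γ_{r+1}) for r ≥ 0). Then the doubly infinite sequence B satisfies the three-term recurrence B (t+1) = s 1 · B t − B (t−1) for every integer t ∈ ℤ. -/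
/-- the doubly infinite extension `B : ℤ → R` of `b` (with the kink
convention `B t = −a (1 − t)` for `t ≤ 0`) satisfies the three-term recurrence
`B (t+1) = s 1 · B t − B (t−1)` for every `t ∈ ℤ`. -/
theorem extended_sequence_recurrence {R : Type*} [CommRing R]
    (s a b : ℕ → R) (B : ℤ → R)
    (hs0 : s 0 = 2)
    (ha : ∀ k : ℕ, 2 ≤ k → a k = s (k - 1) * a 1 + b (k - 1))
    (hb : ∀ k : ℕ, 2 ≤ k → b k = s (k - 1) * b 1 + a (k - 1))
    (hrec : ∀ k : ℕ, s (k + 2) = s 1 * s (k + 1) - s k)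
    (hB1 : ∀ t : ℤ, 1 ≤ t → B t = b t.toNat)
    (hB0 : ∀ t : ℤ, t ≤ 0 → B t = - a (1 - t).toNat) :
    ∀ t : ℤ, B (t + 1) = s 1 * B t - B (t - 1) := by
  have ha2 : a 2 = s 1 * a 1 + b 1 := by simpa using ha 2 (by norm_num)
  have hb2 : b 2 = s 1 * b 1 + a 1 := by simpa using hb 2 (by norm_num)
  have key : ∀ n : ℕ,
      a (n + 3) = s 1 * a (n + 2) - a (n + 1) ∧
      b (n + 3) = s 1 * b (n + 2) - b (n + 1) := by
    intro n
    induction n with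
    | zero =>
      have ha3 : a 3 = s 2 * a 1 + b 2 := by simpa using ha 3 (by norm_num)
      have hb3 : b 3 = s 2 * b 1 + a 2 := by simpa using hb 3 (by norm_num)
      have hs2 : s 2 = s 1 * s 1 - s 0 := by simpa using hrec 0
      constructor
      · rw [ha3, hb2, hs2, hs0, ha2]; ring
      · rw [hb3, ha2, hs2, hs0, hb2]; ring
    | succ m ih =>
      obtain ⟨iha, ihb⟩ := ih
      have hA4 : a (m + 4) = s (m + 3) * a 1 + b (m + 3) := by
        simpa using ha (m + 4) (by omega)
      have hA3 : a (m + 3) = s (m + 2) * a 1 + b (m + 2) := by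
        simpa using ha (m + 3) (by omega)
      have hA2 : a (m + 2) = s (m + 1) * a 1 + b (m + 1) := by
        simpa using ha (m + 2) (by omega)
      have hB4 : b (m + 4) = s (m + 3) * b 1 + a (m + 3) := by
        simpa using hb (m + 4) (by omega)
      have hB3 : b (m + 3) = s (m + 2) * b 1 + a (m + 2) := by
        simpa using hb (m + 3) (by omega)
      have hB2 : b (m + 2) = s (m + 1) * b 1 + a (m + 1) := by
        simpa using hb (m + 2) (by omega)
      have hs : s (m + 3) = s 1 * s (m + 2) - s (m + 1) := by
        simpa [show m + 1 + 2 = m + 3 from rfl] using hrec (m + 1)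
      constructor
      · rw [show m + 1 + 3 = m + 4 from rfl, show m + 1 + 2 = m + 3 from rfl,
          hA4, hs, ihb, hA3, hA2]; ring
      · rw [show m + 1 + 3 = m + 4 from rfl, show m + 1 + 2 = m + 3 from rfl,
          hB4, hs, iha, hB3, hB2]; ring
  intro t
  rcases lt_trichotomy t 1 with h | h | h
  · rcases eq_or_lt_of_le (show t ≤ 0 by omega) with h0 | h0
    · -- t = 0
      subst h0
      rw [hB1 (0 + 1) (by norm_num), hB0 0 le_rfl, hB0 (0 - 1) (by norm_num)]
      norm_num
      rw [show (2 : ℤ).toNat = 2 from rfl, ha2]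
      ring
    · -- t ≤ -1
      obtain ⟨n, rfl⟩ : ∃ n : ℕ, t = -(n : ℤ) - 1 := ⟨(-1 - t).toNat, by omega⟩
      rw [hB0 _ (by omega), hB0 _ (by omega), hB0 _ (by omega)]
      have e1 : (1 - (-(n : ℤ) - 1 + 1)).toNat = n + 1 := by omega
      have e2 : (1 - (-(n : ℤ) - 1)).toNat = n + 2 := by omega
      have e3 : (1 - (-(n : ℤ) - 1 - 1)).toNat = n + 3 := by omega
      rw [e1, e2, e3, (key n).1]
      ring
  · -- t = 1
    subst h
    rw [hB1 (1 + 1) (by norm_num), hB1 1 le_rfl, hB0 (1 - 1) (by norm_num)]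
    norm_num
    rw [show (2 : ℤ).toNat = 2 from rfl, hb2]
  · -- t ≥ 2
    obtain ⟨n, rfl⟩ : ∃ n : ℕ, t = (n : ℤ) + 2 := ⟨(t - 2).toNat, by omega⟩
    rw [hB1 _ (by omega), hB1 _ (by omega), hB1 _ (by omega)]
    have e1 : ((n : ℤ) + 2 + 1).toNat = n + 3 := by omega
    have e2 : ((n : ℤ) + 2).toNat = n + 2 := by omega
    have e3 : ((n : ℤ) + 2 - 1).toNat = n + 1 := by omega
    rw [e1, e2, e3, (key n).2]
end

section
/- Define c : ℕ → R by c 0 = a 1 − b 1 and c k = a k − b k for every k ≥ 1. Then for every k ≥ 2 one has c k = (s (k−1) − s (k−2)) · c 1 + c (k−2). -/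
/-- with `c 0 = a 1 − b 1` and `c k = a k − b k` for `k ≥ 1`, one has
`c k = (s (k−1) − s (k−2)) · c 1 + c (k−2)` for every `k ≥ 2`. -/
theorem complementary_difference_recurrence {R : Type*} [CommRing R]
    (s a b c : ℕ → R)
    (hs0 : s 0 = 2)
    (ha : ∀ k : ℕ, 2 ≤ k → a k = s (k - 1) * a 1 + b (k - 1))
    (hb : ∀ k : ℕ, 2 ≤ k → b k = s (k - 1) * b 1 + a (k - 1))
    (hc0 : c 0 = a 1 - b 1)
    (hc : ∀ k : ℕ, 1 ≤ k → c k = a k - b k) :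
    ∀ k : ℕ, 2 ≤ k → c k = (s (k - 1) - s (k - 2)) * c 1 + c (k - 2) := by
  have key : ∀ k : ℕ, 1 ≤ k → c (k + 1) = s k * c 1 - c k := by
    intro k hk
    have h1 : c (k + 1) = a (k + 1) - b (k + 1) := hc (k + 1) (by omega)
    have h2 : a (k + 1) = s k * a 1 + b k := by
      have := ha (k + 1) (by omega); simpa using this
    have h3 : b (k + 1) = s k * b 1 + a k := by
      have := hb (k + 1) (by omega); simpa using this
    rw [h1, h2, h3, hc k hk, hc 1 le_rfl]
    ring
  have base : c 1 = s 0 * c 1 - c 0 := by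
    rw [hs0, hc0, hc 1 le_rfl]; ring
  intro k hk
  obtain ⟨n, rfl⟩ : ∃ n, k = n + 2 := ⟨k - 2, by omega⟩
  have h1 : c (n + 2) = s (n + 1) * c 1 - c (n + 1) := key (n + 1) (by omega)
  have h2 : c (n + 1) = s n * c 1 - c n := by
    rcases Nat.eq_zero_or_pos n with rfl | hn
    · simpa using base
    · exact key n hn
  have e1 : n + 2 - 1 = n + 1 := by omega
  have e2 : n + 2 - 2 = n := by omega
  rw [e1, e2, h1, h2]
  ring
end

section
/- Define c : ℕ → R by c k = a k − b k for every k ≥ 1. Then for every even k ≥ 2 one has c k = c 1 · (1 + Σ_{i=0}^{k−1} (−1)^{i+1} · s i). -/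
/-- with `c k = a k − b k` for `k ≥ 1`, for every even `k ≥ 2` one has
`c k = c 1 · (1 + Σ_{i=0}^{k−1} (−1)^{i+1} · s i)`. -/
theorem complementary_difference_even {R : Type*} [CommRing R]
    (s a b c : ℕ → R)
    (hs0 : s 0 = 2)
    (ha : ∀ k : ℕ, 2 ≤ k → a k = s (k - 1) * a 1 + b (k - 1))
    (hb : ∀ k : ℕ, 2 ≤ k → b k = s (k - 1) * b 1 + a (k - 1))
    (hc : ∀ k : ℕ, 1 ≤ k → c k = a k - b k) :
    ∀ k : ℕ, 2 ≤ k → Even k →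
      c k = c 1 * (1 + ∑ i ∈ Finset.range k, (-1 : R) ^ (i + 1) * s i) := by
  have key : ∀ k : ℕ, 1 ≤ k →
      c k = (-1 : R) ^ k * c 1 * (1 + ∑ i ∈ Finset.range k, (-1 : R) ^ (i + 1) * s i) := by
    intro k hk
    induction k, hk using Nat.le_induction with
    | base =>
      simp [Finset.sum_range_one, hs0]
      ring
    | succ n hn ih =>
      have hrec : c (n + 1) = s n * c 1 - c n := by
        rw [hc (n + 1) (by omega), ha (n + 1) (by omega), hb (n + 1) (by omega),
          hc n hn, hc 1 le_rfl]
        simp only [Nat.add_sub_cancel]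
        ring
      have h1 : ((-1 : R)) ^ n * (-1) ^ n = 1 := by
        rw [← pow_add]; exact Even.neg_one_pow ⟨n, rfl⟩
      rw [hrec, ih, Finset.sum_range_succ, hc 1 le_rfl]
      linear_combination (s n * b 1 - s n * a 1) * h1
  intro k hk hek
  have := key k (by omega)
  rw [this, hek.neg_one_pow, one_mul]
end

section
/- Define c : ℕ → R by c k = a k − b k for every k ≥ 1. Then for every odd k ≥ 1 one has c k = c 1 · (1 + Σ_{i=1}^{k−1} (−1)^{i} · s i). -/
/-- with `c k = a k − b k` for `k ≥ 1`, for every odd `k ≥ 1` one has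
`c k = c 1 · (1 + Σ_{i=1}^{k−1} (−1)^{i} · s i)`. -/
theorem complementary_difference_odd {R : Type*} [CommRing R]
    (s a b c : ℕ → R)
    (hs0 : s 0 = 2)
    (ha : ∀ k : ℕ, 2 ≤ k → a k = s (k - 1) * a 1 + b (k - 1))
    (hb : ∀ k : ℕ, 2 ≤ k → b k = s (k - 1) * b 1 + a (k - 1))
    (hc : ∀ k : ℕ, 1 ≤ k → c k = a k - b k) :
    ∀ k : ℕ, 1 ≤ k → Odd k →
      c k = c 1 * (1 + ∑ i ∈ Finset.Icc 1 (k - 1), (-1 : R) ^ i * s i) := by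
  have key : ∀ k : ℕ, 1 ≤ k →
      c k = c 1 * ((-1 : R) ^ (k - 1) *
        (1 + ∑ i ∈ Finset.Icc 1 (k - 1), (-1 : R) ^ i * s i)) := by
    intro k hk
    induction k, hk using Nat.le_induction with
    | base => simp
    | succ n hn ih =>
      have hcn : c (n + 1) = s n * c 1 - c n := by
        rw [hc (n + 1) (by omega), ha (n + 1) (by omega), hb (n + 1) (by omega),
          hc n hn, hc 1 le_rfl]
        simp only [Nat.add_sub_cancel]
        ring
      have hn' : n - 1 + 1 = n := by omega
      have hsum : ∑ i ∈ Finset.Icc 1 n, (-1 : R) ^ i * s i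
          = (∑ i ∈ Finset.Icc 1 (n - 1), (-1 : R) ^ i * s i) + (-1 : R) ^ n * s n := by
        conv_lhs => rw [← hn']
        rw [Finset.sum_Icc_succ_top (by omega), hn']
      have h1 : (-1 : R) ^ n = -(-1 : R) ^ (n - 1) := by
        conv_lhs => rw [← hn']
        rw [pow_succ]; ring
      have h2 : (-1 : R) ^ ((n - 1) * 2) = 1 := by
        rw [mul_comm, pow_mul]; simp
      rw [hcn, ih]
      simp only [Nat.add_sub_cancel, hsum, h1]
      linear_combination (-(c 1 * s n)) * h2
  intro k hk hodd
  rw [key k hk]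
  obtain ⟨m, rfl⟩ := hodd
  have h : (2 * m + 1 - 1) = 2 * m := by omega
  rw [h]
  simp [pow_mul]
end
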